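/- Let K be a perfect field and f an irreducible polynomial over K of degree n whose Galois group, acting on the n roots of f in an algebraic closure K̄, is the full symmetric group S_n. For 1 ≤ k ≤ n−2, let L_k = K(α_1,…,α_k) be the extension of K obtained by adjoining any k distinct roots α_1,…,α_k of f. Then the degree [L_k : K] equals n(n−1)⋯(n−k+1) (= ⁿP_k) and the cluster size r_K(L_k) equals k!. -/

import Mathlib

open IntermediateField Polynomial

/-- AlgHoms out of an adjoin are determined by their values on generators. -/
theorem myAlgHomExt {K E E' : Type*} [Field K] [Field E] [Field E'] [Algebra K E]
    [Algebra K E'] {S : Set E} {e e' : ↥(IntermediateField.adjoin K S) →ₐ[K] E'}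
    (h : ∀ x (hx : x ∈ S), e ⟨x, IntermediateField.subset_adjoin K S hx⟩ =
      e' ⟨x, IntermediateField.subset_adjoin K S hx⟩) : e = e' := by
  ext ⟨x, hx⟩
  induction hx using IntermediateField.adjoin_induction with
  | mem x hx => exact h x hx
  | algebraMap x =>
      show e (algebraMap K _ x) = e' (algebraMap K _ x)
      simp
  | add x y hx hy ihx ihy =>
      show e (⟨x, hx⟩ + ⟨y, hy⟩) = e' (⟨x, hx⟩ + ⟨y, hy⟩)
      rw [map_add e ⟨x, hx⟩ ⟨y, hy⟩, map_add e' ⟨x, hx⟩ ⟨y, hy⟩, ihx, ihy]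
  | inv x hx ihx =>
      show e (⟨x, hx⟩)⁻¹ = e' (⟨x, hx⟩)⁻¹
      rw [map_inv₀ e ⟨x, hx⟩, map_inv₀ e' ⟨x, hx⟩, ihx]
  | mul x y hx hy ihx ihy =>
      show e (⟨x, hx⟩ * ⟨y, hy⟩) = e' (⟨x, hx⟩ * ⟨y, hy⟩)
      rw [map_mul e ⟨x, hx⟩ ⟨y, hy⟩, map_mul e' ⟨x, hx⟩ ⟨y, hy⟩, ihx, ihy]

theorem stmt_4 (K : Type*) [Field K] [PerfectField K]
    (f : Polynomial K) (hf : Irreducible f) (n : ℕ) (hdeg : f.natDegree = n)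
    [Fact ((f.map (algebraMap K (AlgebraicClosure K))).Splits)]
    (hGal : Function.Surjective (Polynomial.Gal.galActionHom f (AlgebraicClosure K)))
    (k : ℕ) (hk1 : 1 ≤ k) (hk2 : k ≤ n - 2)
    (α : Fin k → AlgebraicClosure K) (hinj : Function.Injective α)
    (hroots : ∀ i, α i ∈ f.rootSet (AlgebraicClosure K)) :
    Module.finrank K ↥(IntermediateField.adjoin K (Set.range α)) =
        ∏ i ∈ Finset.range k, (n - i) ∧
      ∀ γ : AlgebraicClosure K,
        IntermediateField.adjoin K {γ} = IntermediateField.adjoin K (Set.range α) →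
          {x ∈ (minpoly K γ).rootSet (AlgebraicClosure K) |
            x ∈ IntermediateField.adjoin K (Set.range α)}.ncard = Nat.factorial k := by
  classical
  have hf0 : f ≠ 0 := hf.ne_zero
  have hfsep : f.Separable := PerfectField.separable_of_irreducible hf
  have hsplits : (f.map (algebraMap K (AlgebraicClosure K))).Splits := Fact.out
  set S : Set (AlgebraicClosure K) := Set.range α with hS
  set L : IntermediateField K (AlgebraicClosure K) := IntermediateField.adjoin K S with hL
  have hn : k + 2 ≤ n := by omega
  have hcard : Fintype.card (f.rootSet (AlgebraicClosure K)) = n := by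
    rw [← hdeg]; exact Polynomial.card_rootSet_eq_natDegree hfsep hsplits
  let α' : Fin k → f.rootSet (AlgebraicClosure K) := fun i => ⟨α i, hroots i⟩
  have hα'inj : Function.Injective α' := fun i j h => hinj (congrArg Subtype.val h)
  have hαL : ∀ i, α i ∈ L := fun i => IntermediateField.subset_adjoin K S ⟨i, rfl⟩
  have hint : ∀ x ∈ f.rootSet (AlgebraicClosure K), IsIntegral K x := fun x hx =>
    IsAlgebraic.isIntegral ⟨f, hf0, (Polynomial.mem_rootSet.mp hx).2⟩
  haveI : Finite S := Set.finite_range α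
  haveI hfd : FiniteDimensional K L := IntermediateField.finiteDimensional_adjoin
    (fun x hx => hint x (by obtain ⟨i, rfl⟩ := hx; exact hroots i))
  -- every permutation of the roots is realized by an automorphism of `(AlgebraicClosure K)`
  have hreal : ∀ π : Equiv.Perm (f.rootSet (AlgebraicClosure K)), ∃ σ : (AlgebraicClosure K) ≃ₐ[K] (AlgebraicClosure K),
      ∀ x : f.rootSet (AlgebraicClosure K), σ ↑x = ↑(π x) := by
    intro π
    obtain ⟨g, hg⟩ := hGal π
    obtain ⟨σ, hσ⟩ := Polynomial.Gal.restrict_surjective f (AlgebraicClosure K) g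
    refine ⟨σ, fun x => ?_⟩
    have h1 := Polynomial.Gal.galActionHom_restrict f (AlgebraicClosure K) σ x
    rw [hσ, hg] at h1
    exact h1.symm
  -- automorphisms permute the roots
  have hmaps : ∀ (σ : (AlgebraicClosure K) ≃ₐ[K] (AlgebraicClosure K)) (x : (AlgebraicClosure K)),
      x ∈ f.rootSet (AlgebraicClosure K) → σ x ∈ f.rootSet (AlgebraicClosure K) := by
    intro σ x hx
    rw [Polynomial.mem_rootSet] at hx ⊢
    exact ⟨hx.1, by rw [Polynomial.aeval_algHom_apply σ x f, hx.2, map_zero]⟩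
  -- an automorphism fixing all the `α i` fixes `L` pointwise
  have hfix : ∀ (σ : (AlgebraicClosure K) ≃ₐ[K] (AlgebraicClosure K)), (∀ i, σ (α i) = α i) → ∀ x ∈ L, σ x = x := by
    intro σ hσ x hx
    induction hx using IntermediateField.adjoin_induction with
    | mem x hx => obtain ⟨i, rfl⟩ := hx; exact hσ i
    | algebraMap x => exact σ.commutes x
    | add x y _ _ ihx ihy => rw [map_add, ihx, ihy]
    | inv x _ ihx => rw [map_inv₀, ihx]
    | mul x y _ _ ihx ihy => rw [map_mul, ihx, ihy]
  -- the only roots of `f` in `L` are the `α i`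
  have hLR : ∀ x ∈ f.rootSet (AlgebraicClosure K), x ∈ L → x ∈ S := by
    intro x hxR hxL
    by_contra hxS
    set T : Finset (f.rootSet (AlgebraicClosure K)) := insert ⟨x, hxR⟩ (Finset.image α' Finset.univ) with hT
    have hTcard : T.card ≤ k + 1 := by
      refine le_trans (Finset.card_insert_le _ _) ?_
      have h1 := Finset.card_image_le (f := α') (s := Finset.univ)
      simp only [Finset.card_univ, Fintype.card_fin] at h1
      omega
    obtain ⟨y, hy⟩ : ∃ y, y ∉ T := by
      by_contra h
      push_neg at h
      have h2 : T = Finset.univ := Finset.eq_univ_iff_forall.mpr h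
      rw [h2, Finset.card_univ, hcard] at hTcard
      omega
    have hyx : y ≠ ⟨x, hxR⟩ := fun h => hy (h ▸ Finset.mem_insert_self _ _)
    obtain ⟨σ, hσ⟩ := hreal (Equiv.swap ⟨x, hxR⟩ y)
    have hfixσ : ∀ i, σ (α i) = α i := by
      intro i
      have h1 : α' i ≠ ⟨x, hxR⟩ := fun h => hxS ⟨i, congrArg Subtype.val h⟩
      have h2 : α' i ≠ y := fun h =>
        hy (h ▸ Finset.mem_insert_of_mem (Finset.mem_image_of_mem _ (Finset.mem_univ i)))
      have h3 := hσ (α' i)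
      rwa [Equiv.swap_apply_of_ne_of_ne h1 h2] at h3
    have h1 := hfix σ hfixσ x hxL
    have h2 := hσ ⟨x, hxR⟩
    rw [Equiv.swap_apply_left] at h2
    exact hyx (Subtype.ext (by rw [← h2, h1]))
  -- any injective tuple of roots is realized as image of `α` under an automorphism
  have hlift : ∀ g : Fin k → f.rootSet (AlgebraicClosure K), Function.Injective g →
      ∃ σ : (AlgebraicClosure K) ≃ₐ[K] (AlgebraicClosure K), ∀ i, σ (α i) = ↑(g i) := by
    intro g hg
    let e0 : {u : f.rootSet (AlgebraicClosure K) // u ∈ Set.range α'} ≃ {u : f.rootSet (AlgebraicClosure K) // u ∈ Set.range g} :=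
      (Equiv.ofInjective α' hα'inj).symm.trans (Equiv.ofInjective g hg)
    obtain ⟨σ, hσ⟩ := hreal (Equiv.extendSubtype e0)
    refine ⟨σ, fun i => ?_⟩
    have h1 : (Equiv.extendSubtype e0) (α' i) = ↑(g i) := by
      rw [Equiv.extendSubtype_apply_of_mem e0 (α' i) ⟨i, rfl⟩]
      have h2 : (⟨α' i, ⟨i, rfl⟩⟩ : {u : f.rootSet (AlgebraicClosure K) // u ∈ Set.range α'}) =
          Equiv.ofInjective α' hα'inj i := Subtype.ext rfl
      simp only [e0, Equiv.trans_apply, h2, Equiv.symm_apply_apply]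
      rfl
    have h3 := hσ (α' i)
    rw [h1] at h3
    exact h3
  -- embeddings of `L` send the `α i` to roots of `f`
  have hrootL : ∀ (e : L →ₐ[K] (AlgebraicClosure K)) (i : Fin k), e ⟨α i, hαL i⟩ ∈ f.rootSet (AlgebraicClosure K) := by
    intro e i
    have h0 : Polynomial.aeval (⟨α i, hαL i⟩ : L) f = 0 := by
      have h2 : (L.val) (Polynomial.aeval (⟨α i, hαL i⟩ : L) f) = 0 := by
        rw [← Polynomial.aeval_algHom_apply]
        exact (Polynomial.mem_rootSet.mp (hroots i)).2
      exact Subtype.val_injective h2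
    rw [Polynomial.mem_rootSet]
    exact ⟨hf0, by rw [Polynomial.aeval_algHom_apply e _ f, h0, map_zero]⟩
  -- embeddings of `L` are determined by their values on the `α i`
  have hext : ∀ (e e' : L →ₐ[K] (AlgebraicClosure K)),
      (∀ i, e ⟨α i, hαL i⟩ = e' ⟨α i, hαL i⟩) → e = e' := by
    intro e e' h
    apply myAlgHomExt
    intro x hx
    obtain ⟨i, rfl⟩ := hx
    exact h i
  let Φ : (L →ₐ[K] (AlgebraicClosure K)) → (Fin k → f.rootSet (AlgebraicClosure K)) := fun e i => ⟨e ⟨α i, hαL i⟩, hrootL e i⟩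
  have hΦinj : ∀ e, Function.Injective (Φ e) := by
    intro e i j h
    have h1 : e ⟨α i, hαL i⟩ = e ⟨α j, hαL j⟩ := congrArg Subtype.val h
    have h2 := e.toRingHom.injective h1
    exact hinj (congrArg Subtype.val h2)
  have hΦbij : Function.Bijective
      (fun e : (L →ₐ[K] (AlgebraicClosure K)) => (⟨Φ e, hΦinj e⟩ : Fin k ↪ f.rootSet (AlgebraicClosure K))) := by
    constructor
    · intro e e' h
      apply hext
      intro i
      have h1 : Φ e i = Φ e' i := congrFun (congrArg (fun u : Fin k ↪ _ => (u : Fin k → _)) h) i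
      exact congrArg Subtype.val h1
    · intro g
      obtain ⟨σ, hσ⟩ := hlift g g.injective
      refine ⟨σ.toAlgHom.comp L.val, ?_⟩
      apply Function.Embedding.ext
      intro i
      exact Subtype.ext (hσ i)
  have hfr : Module.finrank K ↥L = ∏ i ∈ Finset.range k, (n - i) := by
    have h1 : Fintype.card (↥L →ₐ[K] (AlgebraicClosure K)) = Module.finrank K ↥L := AlgHom.card K ↥L (AlgebraicClosure K)
    have h2 : Fintype.card (↥L →ₐ[K] (AlgebraicClosure K)) = Fintype.card (Fin k ↪ f.rootSet (AlgebraicClosure K)) :=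
      Fintype.card_of_bijective hΦbij
    rw [← h1, h2, Fintype.card_embedding_eq, Fintype.card_fin, hcard,
      Nat.descFactorial_eq_prod_range]
  refine ⟨hfr, ?_⟩
  intro γ hγ
  have hγL : γ ∈ L := hγ ▸ IntermediateField.mem_adjoin_simple_self K γ
  have hγint : IsIntegral K γ := (IsIntegral.of_finite K (⟨γ, hγL⟩ : L)).map L.val
  have hm0 : minpoly K γ ≠ 0 := minpoly.ne_zero hγint
  -- every embedding of `L` extends to an automorphism of `(AlgebraicClosure K)`
  have hext_all : ∀ e : L →ₐ[K] (AlgebraicClosure K), ∃ σ : (AlgebraicClosure K) ≃ₐ[K] (AlgebraicClosure K), ∀ x : L, σ ↑x = e x := by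
    intro e
    obtain ⟨σ, hσ⟩ := hlift (Φ e) (hΦinj e)
    have he : σ.toAlgHom.comp L.val = e := by
      apply hext
      intro i
      show σ (α i) = _
      rw [hσ i]
    exact ⟨σ, fun x => by rw [← he]; rfl⟩
  have hmemS : ∀ (σ : (AlgebraicClosure K) ≃ₐ[K] (AlgebraicClosure K)), (∀ i, σ (α i) ∈ S) → ∀ x ∈ L, σ x ∈ L := by
    intro σ hσ x hx
    have h1 : L.map σ.toAlgHom ≤ L := by
      rw [hL, IntermediateField.adjoin_map]
      apply IntermediateField.adjoin_le_iff.mpr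
      rintro y ⟨s, hs, rfl⟩
      obtain ⟨i, rfl⟩ := hs
      exact IntermediateField.subset_adjoin K S (hσ i)
    exact h1 ⟨x, hx, rfl⟩
  have hmemS' : ∀ (σ : (AlgebraicClosure K) ≃ₐ[K] (AlgebraicClosure K)), σ γ ∈ L → ∀ i, σ (α i) ∈ S := by
    intro σ hσγ i
    apply hLR _ (hmaps σ _ (hroots i))
    have h1 : L.map σ.toAlgHom = IntermediateField.adjoin K {σ γ} := by
      rw [← hγ, IntermediateField.adjoin_map, Set.image_singleton]
      rfl
    have h2 : L.map σ.toAlgHom ≤ L := by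
      rw [h1]
      exact IntermediateField.adjoin_le_iff.mpr (Set.singleton_subset_iff.mpr hσγ)
    exact h2 ⟨α i, hαL i, rfl⟩
  have hiff : ∀ e : L →ₐ[K] (AlgebraicClosure K), (e ⟨γ, hγL⟩ ∈ L ↔ ∀ i, e ⟨α i, hαL i⟩ ∈ S) := by
    intro e
    obtain ⟨σ, hσ⟩ := hext_all e
    constructor
    · intro h i
      have h1 := hmemS' σ (by rw [show σ γ = e ⟨γ, hγL⟩ from hσ ⟨γ, hγL⟩]; exact h) i
      rwa [show σ (α i) = e ⟨α i, hαL i⟩ from hσ ⟨α i, hαL i⟩] at h1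
    · intro h
      have h1 := hmemS σ
        (fun i => by rw [show σ (α i) = e ⟨α i, hαL i⟩ from hσ ⟨α i, hαL i⟩]; exact h i) γ hγL
      rwa [show σ γ = e ⟨γ, hγL⟩ from hσ ⟨γ, hγL⟩] at h1
  -- evaluation of the minimal polynomial
  have hγ'0 : Polynomial.aeval (⟨γ, hγL⟩ : L) (minpoly K γ) = 0 := by
    apply Subtype.val_injective
    show (L.val) (Polynomial.aeval (⟨γ, hγL⟩ : L) (minpoly K γ)) = _
    rw [← Polynomial.aeval_algHom_apply]
    simpa using minpoly.aeval K γ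
  have hroot' : ∀ e : L →ₐ[K] (AlgebraicClosure K), e ⟨γ, hγL⟩ ∈ (minpoly K γ).rootSet (AlgebraicClosure K) := by
    intro e
    rw [Polynomial.mem_rootSet]
    exact ⟨hm0, by rw [Polynomial.aeval_algHom_apply e _ _, hγ'0, map_zero]⟩
  -- embeddings are determined by their value at `γ`
  have hextγ : ∀ (e e' : L →ₐ[K] (AlgebraicClosure K)), e ⟨γ, hγL⟩ = e' ⟨γ, hγL⟩ → e = e' := by
    intro e e' h
    let j : ↥(IntermediateField.adjoin K ({γ} : Set (AlgebraicClosure K))) ≃ₐ[K] ↥L :=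
      IntermediateField.equivOfEq hγ
    have h2 : e.comp j.toAlgHom = e'.comp j.toAlgHom := by
      apply myAlgHomExt
      intro x hx
      have hxγ : x = γ := hx
      have h3 : j ⟨x, IntermediateField.subset_adjoin K ({γ} : Set (AlgebraicClosure K)) hx⟩ =
          ⟨γ, hγL⟩ := Subtype.ext hxγ
      show e (j _) = e' (j _)
      rw [h3]
      exact h
    ext x
    have h4 := congrArg (fun u : _ →ₐ[K] (AlgebraicClosure K) => u (j.symm x)) h2
    simpa using h4
  -- the cluster bijection
  have hψ : Function.Bijective (fun e : {e : L →ₐ[K] (AlgebraicClosure K) // e ⟨γ, hγL⟩ ∈ L} =>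
      (⟨e.1 ⟨γ, hγL⟩, hroot' e.1, e.2⟩ :
        {x ∈ (minpoly K γ).rootSet (AlgebraicClosure K) | x ∈ L})) := by
    constructor
    · intro e e' h
      exact Subtype.ext (hextγ e.1 e'.1 (congrArg Subtype.val h))
    · rintro ⟨x, hxM, hxL⟩
      have hxa : x ∈ (minpoly K γ).aroots (AlgebraicClosure K) := by
        rw [Polynomial.mem_aroots]
        exact ⟨hm0, (Polynomial.mem_rootSet.mp hxM).2⟩
      let e0 := (IntermediateField.algHomAdjoinIntegralEquiv K hγint).symm ⟨x, hxa⟩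
      let e : L →ₐ[K] (AlgebraicClosure K) := e0.comp (IntermediateField.equivOfEq hγ.symm).toAlgHom
      have he : e ⟨γ, hγL⟩ = x := by
        have h3 : (IntermediateField.equivOfEq hγ.symm).toAlgHom ⟨γ, hγL⟩ =
            IntermediateField.AdjoinSimple.gen K γ := Subtype.ext rfl
        show e0 ((IntermediateField.equivOfEq hγ.symm).toAlgHom ⟨γ, hγL⟩) = x
        rw [h3]
        exact IntermediateField.algHomAdjoinIntegralEquiv_symm_apply_gen K hγint ⟨x, hxa⟩
      exact ⟨⟨e, he ▸ hxL⟩, Subtype.ext he⟩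
  -- the second counting bijection
  haveI : Fintype ↥S := (Set.finite_range α).fintype
  have hScard : Fintype.card ↥S = k := by
    rw [← Nat.card_eq_fintype_card, Nat.card_range_of_injective hinj,
      Nat.card_eq_fintype_card, Fintype.card_fin]
  have hSroot : ∀ x : ↥S, (x : (AlgebraicClosure K)) ∈ f.rootSet (AlgebraicClosure K) := by
    rintro ⟨x, i, rfl⟩
    exact hroots i
  have hχinj : ∀ e : {e : L →ₐ[K] (AlgebraicClosure K) // e ⟨γ, hγL⟩ ∈ L},
      Function.Injective (fun i => (⟨e.1 ⟨α i, hαL i⟩, (hiff e.1).mp e.2 i⟩ : ↥S)) := by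
    intro e i j h
    have h1 : e.1 ⟨α i, hαL i⟩ = e.1 ⟨α j, hαL j⟩ := congrArg Subtype.val h
    exact hinj (congrArg Subtype.val (e.1.toRingHom.injective h1))
  have hχ : Function.Bijective (fun e : {e : L →ₐ[K] (AlgebraicClosure K) // e ⟨γ, hγL⟩ ∈ L} =>
      (⟨fun i => (⟨e.1 ⟨α i, hαL i⟩, (hiff e.1).mp e.2 i⟩ : ↥S), hχinj e⟩ : Fin k ↪ ↥S)) := by
    constructor
    · intro e e' h
      apply Subtype.ext
      apply hext
      intro i
      have h1 : (⟨e.1 ⟨α i, hαL i⟩, (hiff e.1).mp e.2 i⟩ : ↥S)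
          = ⟨e'.1 ⟨α i, hαL i⟩, (hiff e'.1).mp e'.2 i⟩ :=
        congrFun (congrArg (fun u : Fin k ↪ ↥S => (u : Fin k → ↥S)) h) i
      exact congrArg Subtype.val h1
    · intro g
      have hg' : Function.Injective
          (fun i => (⟨(g i : AlgebraicClosure K), hSroot (g i)⟩ : f.rootSet (AlgebraicClosure K))) := by
        intro i j h
        have h2 : ((g i : AlgebraicClosure K)) = ((g j : AlgebraicClosure K)) :=
          congrArg (fun u : ↑(f.rootSet (AlgebraicClosure K)) => (u : AlgebraicClosure K)) h
        exact g.injective (Subtype.ext h2)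
      obtain ⟨σ, hσ⟩ := hlift _ hg'
      have heα : ∀ i, (σ.toAlgHom.comp L.val) ⟨α i, hαL i⟩ = ↑(g i) := fun i => hσ i
      have heγ : (σ.toAlgHom.comp L.val) ⟨γ, hγL⟩ ∈ L :=
        (hiff _).mpr (fun i => by rw [heα i]; exact (g i).2)
      refine ⟨⟨σ.toAlgHom.comp L.val, heγ⟩, ?_⟩
      apply Function.Embedding.ext
      intro i
      exact Subtype.ext (heα i)
  have hA1 : {x ∈ (minpoly K γ).rootSet (AlgebraicClosure K) | x ∈ L}.ncard
      = Nat.card {e : L →ₐ[K] (AlgebraicClosure K) // e ⟨γ, hγL⟩ ∈ L} := by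
    rw [← Nat.card_coe_set_eq]
    exact (Nat.card_eq_of_bijective _ hψ).symm
  rw [hA1, Nat.card_eq_of_bijective _ hχ, Nat.card_eq_fintype_card,
    Fintype.card_embedding_eq, Fintype.card_fin, hScard, Nat.descFactorial_self]
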